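/- arXiv:1103.5820 — 2 statements merged into one kernel-verified Lean document; each statement's English description precedes it below -/
import Mathlib

section
/- Every finitely generated free group has a descending chain of finite index subgroups tending to the trivial group; that is, there exist subgroups Γ₁ ⊋ Γ₂ ⊋ ⋯ of the free group F with Γ₁ = F, each Γᵢ of finite index in F, and ⋂ᵢ Γᵢ = {e}. -/
open FreeGroup Function

private lemma my_reduce_tail {α : Type*} [DecidableEq α] (a : α × Bool)
    (l : List (α × Bool)) (h : reduce (a :: l) = a :: l) : reduce l = l := by
  have hred : FreeGroup.Red l (reduce l) := reduce.red
  have hlen := FreeGroup.Red.length_le hred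
  rcases hr : reduce l with _ | ⟨b, t⟩
  · rw [reduce.cons, hr] at h
    injection h with h1 h2
  · rw [reduce.cons, hr] at h
    have h' : (if a.1 = b.1 ∧ a.2 = !b.2 then t else a :: b :: t) = a :: l := h
    split_ifs at h' with hc
    · rw [hr, h'] at hlen
      simp at hlen
    · injection h' with h1 h2

private lemma my_rf {n : ℕ} (g : FreeGroup (Fin n)) (hg : g ≠ 1) :
    ∃ K : Subgroup (FreeGroup (Fin n)), K.FiniteIndex ∧ g ∉ K := by
  classical
  set L := g.norm with hL
  let X := {u : FreeGroup (Fin n) // u.norm ≤ L}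
  haveI hfin : Finite X := by
    have h1 : Finite {l : List (Fin n × Bool) // l.length ≤ L} :=
      (List.finite_length_le _ L).to_subtype
    exact Finite.of_injective
      (fun u : X => (⟨u.1.toWord, u.2⟩ : {l : List (Fin n × Bool) // l.length ≤ L}))
      (fun u v h => Subtype.ext (toWord_injective (congrArg Subtype.val h)))
  have key : ∀ a : Fin n, ∃ π : Equiv.Perm X, ∀ (u : FreeGroup (Fin n)) (hu : u.norm ≤ L)
      (h2 : (of a * u).norm ≤ L), π ⟨u, hu⟩ = ⟨of a * u, h2⟩ := by
    intro a
    set m := (of a : FreeGroup (Fin n)) with hm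
    let e : {x : X // (m * x.1).norm ≤ L} ≃ {x : X // (m⁻¹ * x.1).norm ≤ L} :=
      { toFun := fun x => ⟨⟨m * x.1.1, x.2⟩, by simpa using x.1.2⟩
        invFun := fun y => ⟨⟨m⁻¹ * y.1.1, y.2⟩, by simpa using y.1.2⟩
        left_inv := fun x => by ext : 2; simp
        right_inv := fun y => by ext : 2; simp }
    refine ⟨e.extendSubtype, fun u hu h2 => ?_⟩
    rw [e.extendSubtype_apply_of_mem ⟨u, hu⟩ h2]
    rfl
  choose π hπ using key
  set φ := FreeGroup.lift π with hφ
  have step : ∀ (x : Fin n) (b : Bool) (u : FreeGroup (Fin n)) (hu : u.norm ≤ L),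
      (mk [(x, b)] * u).norm ≤ L →
      ((φ (mk [(x, b)]) ⟨u, hu⟩ : X) : FreeGroup (Fin n)) = mk [(x, b)] * u := by
    intro x b u hu h2
    cases b
    · have hm : (mk [(x, false)] : FreeGroup (Fin n)) = (of x)⁻¹ := by
        rw [of, inv_mk]; rfl
      rw [hm] at h2 ⊢
      rw [_root_.map_inv, hφ, lift_apply_of]
      have h3 : (of x * ((of x)⁻¹ * u)).norm ≤ L := by simpa using hu
      have h4 : (π x) ⟨(of x)⁻¹ * u, h2⟩ = ⟨u, hu⟩ := by
        rw [hπ x ((of x)⁻¹ * u) h2 h3]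
        exact Subtype.ext (by simp)
      calc (((π x)⁻¹ ⟨u, hu⟩ : X) : FreeGroup (Fin n))
          = (((π x)⁻¹ ((π x) ⟨(of x)⁻¹ * u, h2⟩) : X) : FreeGroup (Fin n)) := by rw [h4]
        _ = (of x)⁻¹ * u := by rw [Equiv.Perm.inv_def, Equiv.symm_apply_apply]
    · have hm : (mk [(x, true)] : FreeGroup (Fin n)) = of x := rfl
      rw [hm] at h2 ⊢
      rw [hφ, lift_apply_of, hπ x u hu h2]
  -- main induction
  have main : ∀ l : List (Fin n × Bool), reduce l = l → l.length ≤ L →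
      ∀ (h1 : (1 : FreeGroup (Fin n)).norm ≤ L),
      ((φ (mk l) ⟨1, h1⟩ : X) : FreeGroup (Fin n)) = mk l := by
    intro l
    induction l with
    | nil =>
      intro _ _ h1
      rw [show (mk [] : FreeGroup (Fin n)) = 1 from one_eq_mk.symm, _root_.map_one]
      rfl
    | cons a l ih =>
      intro hr hlen h1
      have hl' : reduce l = l := my_reduce_tail a l hr
      have hsplit : (mk (a :: l) : FreeGroup (Fin n)) = mk [a] * mk l := by
        rw [mul_mk, List.singleton_append]
      have hnl : (mk l : FreeGroup (Fin n)).norm = l.length := by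
        rw [FreeGroup.norm, toWord_mk, hl']
      have h3 : (mk l : FreeGroup (Fin n)).norm ≤ L := by
        rw [hnl]; exact le_trans (Nat.le_succ _) hlen
      have h2 : (mk [a] * mk l : FreeGroup (Fin n)).norm ≤ L := by
        rw [← hsplit, FreeGroup.norm, toWord_mk, hr]; exact hlen
      have ihv := ih hl' (le_trans (Nat.le_succ _) hlen) h1
      have hx : (φ (mk l) ⟨1, h1⟩ : X) = ⟨mk l, h3⟩ := Subtype.ext ihv
      rw [hsplit, _root_.map_mul, Equiv.Perm.mul_apply, hx]
      obtain ⟨x, b⟩ := a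
      exact step x b (mk l) h3 h2
  -- conclude
  have h1 : (1 : FreeGroup (Fin n)).norm ≤ L := by simp [FreeGroup.norm_one]
  have hφg : φ g ≠ 1 := by
    intro hone
    have hm := main g.toWord (reduce_toWord g) (le_of_eq rfl) h1
    rw [mk_toWord] at hm
    rw [hone] at hm
    simp at hm
    exact hg hm.symm
  refine ⟨φ.ker, inferInstance, ?_⟩
  rw [MonoidHom.mem_ker]
  exact hφg

/-- Every finitely generated free group (on at least one generator) has a descending
chain of finite index subgroups tending to the trivial group. -/
theorem free_group_desc_chain_to_trivial (n : ℕ) (hn : 1 ≤ n) :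
    ∃ Γ : ℕ → Subgroup (FreeGroup (Fin n)),
      Γ 0 = ⊤ ∧ (∀ i, Γ (i + 1) < Γ i) ∧ (∀ i, (Γ i).FiniteIndex) ∧
      (⨅ i, Γ i) = ⊥ := by
  classical
  haveI : Nonempty (Fin n) := ⟨⟨0, hn⟩⟩
  haveI : Countable (FreeGroup (Fin n)) := FreeGroup.toWord_injective.countable
  obtain ⟨f, hf⟩ := exists_surjective_nat (FreeGroup (Fin n))
  -- any finite-index subgroup contains a nontrivial element
  have nontriv : ∀ Γ : Subgroup (FreeGroup (Fin n)), Γ.FiniteIndex →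
      ∃ x ∈ Γ, x ≠ 1 := by
    intro Γ hΓ
    by_contra hcon
    push_neg at hcon
    have hbot : Γ = ⊥ := by
      ext x
      simp only [Subgroup.mem_bot]
      exact ⟨fun hx => hcon x hx, fun hx => hx ▸ Γ.one_mem⟩
    have := hΓ.index_ne_zero
    rw [hbot, Subgroup.index_bot, Nat.card_eq_zero_of_infinite] at this
    exact this rfl
  -- refinement step
  have step : ∀ (Γ : Subgroup (FreeGroup (Fin n))) (g : FreeGroup (Fin n)),
      Γ.FiniteIndex → ∃ K : Subgroup (FreeGroup (Fin n)),
      K.FiniteIndex ∧ K < Γ ∧ (g ≠ 1 → g ∉ K) := by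
    intro Γ g hΓ
    haveI := hΓ
    obtain ⟨N, hNfi, hgN⟩ : ∃ N : Subgroup (FreeGroup (Fin n)),
        N.FiniteIndex ∧ (g ≠ 1 → g ∉ N) := by
      by_cases hg1 : g = 1
      · exact ⟨⊤, inferInstance, fun h => absurd hg1 h⟩
      · obtain ⟨N, h1, h2⟩ := my_rf g hg1
        exact ⟨N, h1, fun _ => h2⟩
    haveI := hNfi
    haveI : (Γ ⊓ N).FiniteIndex := inferInstance
    obtain ⟨h, hhmem, hh1⟩ := nontriv (Γ ⊓ N) inferInstance
    obtain ⟨M, hMfi, hhM⟩ := my_rf h hh1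
    haveI := hMfi
    refine ⟨Γ ⊓ N ⊓ M, inferInstance, ?_, ?_⟩
    · rw [SetLike.lt_iff_le_and_exists]
      refine ⟨le_trans inf_le_left inf_le_left, h, hhmem.1, ?_⟩
      intro hmem
      exact hhM hmem.2
    · intro hg1 hmem
      exact (hgN hg1) hmem.1.2
  choose K hKfi hKlt hKg using step
  let chain : ℕ → {Γ : Subgroup (FreeGroup (Fin n)) // Γ.FiniteIndex} :=
    fun i => Nat.rec ⟨⊤, inferInstance⟩
      (fun i p => ⟨K p.1 (f i) p.2, hKfi p.1 (f i) p.2⟩) i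
  have hchain : ∀ i, chain (i + 1) =
      ⟨K (chain i).1 (f i) (chain i).2, hKfi (chain i).1 (f i) (chain i).2⟩ :=
    fun i => rfl
  refine ⟨fun i => (chain i).1, rfl, fun i => ?_, fun i => (chain i).2, ?_⟩
  · show (chain (i + 1)).1 < (chain i).1
    rw [hchain i]
    exact hKlt (chain i).1 (f i) (chain i).2
  · rw [eq_bot_iff]
    intro x hx
    rw [Subgroup.mem_iInf] at hx
    rw [Subgroup.mem_bot]
    by_contra hx1
    obtain ⟨k, hk⟩ := hf x
    have := hx (k + 1)
    rw [hchain k] at this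
    exact hKg (chain k).1 (f k) (chain k).2 (hk.symm ▸ hx1) (hk ▸ this)
end

section
/- A finitely generated free group is residually finite: for every nontrivial element g of a finitely generated free group F, there exists a finite index normal subgroup N of F not containing g. -/
namespace RFaux

variable {n : ℕ} (w : List (Fin n × Bool)) (d : Fin n × Bool)

/-- letter at position `k` (with default `d`). -/
def c (k : ℕ) : Fin n × Bool := w.getD k d

lemma adj (hred : FreeGroup.reduce w = w) {a : ℕ} {i : Fin n} {b : Bool}
    (ha : a + 1 < w.length) (h1 : c w d a = (i, b)) (h2 : c w d (a + 1) = (i, !b)) : False := by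
  have ha0 : a < w.length := by omega
  have e1 : w[a] = (i, b) := by rwa [c, List.getD_eq_getElem w d ha0] at h1
  have e2 : w[a + 1] = (i, !b) := by rwa [c, List.getD_eq_getElem w d ha] at h2
  have hw : w = w.take a ++ (i, b) :: (i, !b) :: w.drop (a + 2) := by
    conv_lhs => rw [← List.take_append_drop a w]
    rw [List.drop_eq_getElem_cons ha0, List.drop_eq_getElem_cons ha, e1, e2]
  exact FreeGroup.reduce.not (hred.trans hw)

def P (i : Fin n) (k : Fin (w.length + 1)) : Prop :=
  (0 < (k : ℕ) ∧ c w d ((k : ℕ) - 1) = (i, true)) ∨ ((k : ℕ) < w.length ∧ c w d k = (i, false))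

def Q (i : Fin n) (k : Fin (w.length + 1)) : Prop :=
  ((k : ℕ) < w.length ∧ c w d k = (i, true)) ∨ (0 < (k : ℕ) ∧ c w d ((k : ℕ) - 1) = (i, false))

open Classical in
noncomputable def e (hred : FreeGroup.reduce w = w) (i : Fin n) :
    { k // P w d i k } ≃ { k // Q w d i k } where
  toFun x :=
    if h : 0 < (x.1 : ℕ) ∧ c w d ((x.1 : ℕ) - 1) = (i, true) then
      ⟨⟨(x.1 : ℕ) - 1, by omega⟩,
        Or.inl ⟨(by have h1 : 0 < (x.1 : ℕ) := h.1; have h2 := x.1.isLt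
                    show (x.1 : ℕ) - 1 < w.length; omega), h.2⟩⟩
    else
      ⟨⟨(x.1 : ℕ) + 1, by have := (x.2.resolve_left h).1; omega⟩,
        Or.inr ⟨Nat.succ_pos _,
          (by show c w d ((x.1 : ℕ) + 1 - 1) = (i, false)
              rw [Nat.add_sub_cancel]; exact (x.2.resolve_left h).2)⟩⟩
  invFun y :=
    if h : (y.1 : ℕ) < w.length ∧ c w d (y.1 : ℕ) = (i, true) then
      ⟨⟨(y.1 : ℕ) + 1, by have := h.1; omega⟩,
        Or.inl ⟨Nat.succ_pos _,
          (by show c w d ((y.1 : ℕ) + 1 - 1) = (i, true)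
              rw [Nat.add_sub_cancel]; exact h.2)⟩⟩
    else
      ⟨⟨(y.1 : ℕ) - 1, by have := y.1.isLt; omega⟩,
        Or.inr ⟨(by have h1 : 0 < (y.1 : ℕ) := (y.2.resolve_left h).1
                    have h2 := y.1.isLt
                    show (y.1 : ℕ) - 1 < w.length; omega), (y.2.resolve_left h).2⟩⟩
  left_inv := by
    rintro ⟨⟨k, hk⟩, hP⟩
    dsimp only
    split_ifs with h1 h2 h2
    · have h1a : 0 < k := h1.1
      exact Subtype.ext (Fin.ext (by show k - 1 + 1 = k; omega))
    · exfalso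
      have h1a : 0 < k := h1.1
      have h1b : c w d (k - 1) = (i, true) := h1.2
      exact h2 ⟨by show k - 1 < w.length; omega, h1b⟩
    · exfalso
      have hx := hP.resolve_left h1
      have hxa : k < w.length := hx.1
      have hxb : c w d k = (i, false) := hx.2
      have h2a : k + 1 < w.length := h2.1
      have h2b : c w d (k + 1) = (i, true) := h2.2
      exact adj w d hred h2a hxb h2b
    · exact Subtype.ext (Fin.ext (by show k + 1 - 1 = k; omega))
  right_inv := by
    rintro ⟨⟨k, hk⟩, hQ⟩
    dsimp only
    split_ifs with h1 h2 h2
    · exact Subtype.ext (Fin.ext (by show k + 1 - 1 = k; omega))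
    · exfalso
      have h1a : k < w.length := h1.1
      have h1b : c w d k = (i, true) := h1.2
      have h1b' : c w d (k + 1 - 1) = (i, true) := by rw [Nat.add_sub_cancel]; exact h1b
      exact h2 ⟨Nat.succ_pos _, h1b'⟩
    · exfalso
      have hx := hQ.resolve_left h1
      have hxa : 0 < k := hx.1
      have hxb : c w d (k - 1) = (i, false) := hx.2
      have h2a : 0 < k - 1 := h2.1
      have h2b : c w d (k - 1 - 1) = (i, true) := h2.2
      have heq : (k - 1 - 1) + 1 = k - 1 := by omega
      exact adj w d hred (a := k - 1 - 1) (by omega) h2b (by rw [heq]; exact hxb)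
    · have hx := hQ.resolve_left h1
      have hxa : 0 < k := hx.1
      exact Subtype.ext (Fin.ext (by show k - 1 + 1 = k; omega))

open Classical in
noncomputable def sigma (hred : FreeGroup.reduce w = w) (i : Fin n) :
    Equiv.Perm (Fin (w.length + 1)) :=
  (e w d hred i).extendSubtype

lemma sigma_apply_true (hred : FreeGroup.reduce w = w) {i : Fin n} {k : ℕ}
    (hk : k < w.length) (hc : c w d k = (i, true)) :
    sigma w d hred i ⟨k + 1, by omega⟩ = ⟨k, by omega⟩ := by
  classical
  have hc' : c w d (k + 1 - 1) = (i, true) := by rw [Nat.add_sub_cancel]; exact hc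
  have hP : P w d i ⟨k + 1, by omega⟩ := Or.inl ⟨Nat.succ_pos _, hc'⟩
  rw [sigma, Equiv.extendSubtype_apply_of_mem _ _ hP]
  show ((e w d hred i ⟨⟨k + 1, by omega⟩, hP⟩ : { k // Q w d i k }) : Fin (w.length + 1)) = _
  rw [e]
  simp only [Equiv.coe_fn_mk]
  rw [dif_pos (⟨Nat.succ_pos _, hc'⟩ :
    0 < ((⟨k + 1, by omega⟩ : Fin (w.length + 1)) : ℕ) ∧
      c w d (((⟨k + 1, by omega⟩ : Fin (w.length + 1)) : ℕ) - 1) = (i, true))]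
  rfl

lemma sigma_apply_false (hred : FreeGroup.reduce w = w) {i : Fin n} {k : ℕ}
    (hk : k < w.length) (hc : c w d k = (i, false)) :
    sigma w d hred i ⟨k, by omega⟩ = ⟨k + 1, by omega⟩ := by
  classical
  have hP : P w d i ⟨k, by omega⟩ := Or.inr ⟨hk, hc⟩
  rw [sigma, Equiv.extendSubtype_apply_of_mem _ _ hP]
  show ((e w d hred i ⟨⟨k, by omega⟩, hP⟩ : { k // Q w d i k }) : Fin (w.length + 1)) = _
  rw [e]
  simp only [Equiv.coe_fn_mk]
  rw [dif_neg]
  rintro ⟨h0, ht⟩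
  have h0' : 0 < k := h0
  have ht' : c w d (k - 1) = (i, true) := ht
  have heq : (k - 1) + 1 = k := by omega
  exact adj w d hred (a := k - 1) (by omega) ht' (by rw [heq]; exact hc)

lemma key (hred : FreeGroup.reduce w = w) :
    ∀ m, m ≤ w.length →
      (((w.drop (w.length - m)).map
          (fun x => cond x.2 (sigma w d hred x.1) (sigma w d hred x.1)⁻¹)).prod)
          ⟨w.length, Nat.lt_succ_self _⟩ = ⟨w.length - m, by omega⟩ := by
  intro m
  induction m with
  | zero =>
    intro _
    simp
  | succ m ih =>
    intro hm
    have hj : w.length - (m + 1) < w.length := by omega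
    have hj1 : w.length - (m + 1) + 1 = w.length - m := by omega
    rw [List.drop_eq_getElem_cons hj, List.map_cons, List.prod_cons, Equiv.Perm.mul_apply,
      hj1, ih (by omega)]
    have hc : c w d (w.length - (m + 1)) = w[w.length - (m + 1)] :=
      List.getD_eq_getElem w d hj
    rcases hgl : w[w.length - (m + 1)] with ⟨i, b⟩
    rw [hgl] at hc
    have hpt : (⟨w.length - m, by omega⟩ : Fin (w.length + 1)) =
        ⟨(w.length - (m + 1)) + 1, by omega⟩ :=
      Fin.ext (show w.length - m = w.length - (m + 1) + 1 by omega)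
    rw [hpt]
    cases b with
    | true =>
      exact sigma_apply_true w d hred hj hc
    | false =>
      show (sigma w d hred i)⁻¹ _ = _
      rw [← sigma_apply_false w d hred hj hc, Equiv.Perm.inv_def, Equiv.symm_apply_apply]

end RFaux

/-- A finitely generated free group is residually finite. -/
theorem free_group_residually_finite (n : ℕ) (g : FreeGroup (Fin n)) (hg : g ≠ 1) :
    ∃ N : Subgroup (FreeGroup (Fin n)), N.Normal ∧ N.FiniteIndex ∧ g ∉ N := by
  classical
  set w := g.toWord with hwdef
  have hred : FreeGroup.reduce w = w := FreeGroup.reduce_toWord g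
  have hw0 : w ≠ [] := fun h => hg (FreeGroup.toWord_eq_nil_iff.mp h)
  have hL : 0 < w.length := List.length_pos_iff.mpr hw0
  set d : Fin n × Bool := w.get ⟨0, hL⟩ with hddef
  set φ : FreeGroup (Fin n) →* Equiv.Perm (Fin (w.length + 1)) :=
    FreeGroup.lift (fun i => RFaux.sigma w d hred i) with hφdef
  have hφg : φ g ⟨w.length, Nat.lt_succ_self _⟩ = ⟨0, Nat.succ_pos _⟩ := by
    have h1 : φ g = ((w.map fun x =>
        cond x.2 (RFaux.sigma w d hred x.1) (RFaux.sigma w d hred x.1)⁻¹)).prod := by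
      conv_lhs => rw [← FreeGroup.mk_toWord (x := g)]
      exact FreeGroup.lift_mk
    rw [h1]
    have hkey := RFaux.key w d hred w.length le_rfl
    simp only [Nat.sub_self, List.drop_zero] at hkey
    exact hkey
  have hφ1 : φ g ≠ 1 := by
    intro h
    rw [h] at hφg
    simp only [Equiv.Perm.coe_one, id_eq, Fin.mk_eq_mk] at hφg
    omega
  refine ⟨φ.ker, MonoidHom.normal_ker φ, Subgroup.finiteIndex_ker φ, ?_⟩
  simpa [MonoidHom.mem_ker] using hφ1
end
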